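/- Let A/ℚ be a principally polarized abelian variety of dimension d, let ℓ be a rational prime, and let ρ̄_{A,ℓ} : Gal(ℚ̄/ℚ) → GSp_{2d}(𝔽_ℓ) be the mod ℓ representation of A. If ρ̄_{A,ℓ} is surjective, then 𝒞_ℓ(A) ≠ ∅, i.e. there exists σ ∈ Gal(ℚ(A[ℓ])/ℚ(ζ_ℓ)) acting freely on A[ℓ]. -/

import Mathlib

/-- The multiplicative group structure (composition) that older Mathlib put on `AddAut M`. -/
instance AddAut.group (M : Type*) [Add M] : Group (AddAut M) where
  mul g h := AddEquiv.trans h g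
  one := AddEquiv.refl _
  inv := AddEquiv.symm
  mul_assoc _ _ _ := rfl
  one_mul _ := rfl
  mul_one _ := rfl
  inv_mul_cancel := AddEquiv.self_trans_symm

/-- The data of an abelian variety `A` over `ℚ`: the Mordell–Weil groups `A(L)` of
extensions `L/ℚ`; the conductor `N_A`; the groups `A(𝔽_p)` of points of the reduction at a
good prime `p` (`p` is of good reduction iff `p ∤ N_A`); the sets of `S`-integral points of
the punctured variety `A ∖ {0}` over `O_{L,S}` (`S` a set of rational primes, `O_{L,S}` the
ring of `T`-integers for `T` the places above `S`); the `n`-torsion `A[n]` of `A(ℚ̄)` with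
its Galois action; and a choice of Frobenius element at each prime. -/
structure AbelianVarietyQ : Type 1 where
  /-- the Mordell–Weil group `A(L)` -/
  Point : (L : Type) → [Field L] → [Algebra ℚ L] → Type
  instAddCommGroup : ∀ (L : Type) [Field L] [Algebra ℚ L], AddCommGroup (Point L)
  /-- the conductor `N_A` of `A`; a prime `p ∤ N_A` is a prime of good reduction -/
  conductor : ℕ
  conductor_pos : 0 < conductor
  /-- the group `A(𝔽_p)` of points of the reduction of `A` modulo a good prime `p` -/
  ResPoint : ℕ → Type
  instResAddCommGroup : ∀ p, AddCommGroup (ResPoint p)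
  instResFinite : ∀ p, Finite (ResPoint p)
  /-- the set `(A ∖ {0})(O_{L,S})` of `S`-integral points of the punctured abelian variety,
  viewed inside `A(L)`; here `S` is a set of rational primes and `O_{L,S}` is the ring of
  `T`-integers of `L` where `T` is the set of places of `L` above the primes of `S` -/
  puncturedIntegralPoints : (L : Type) → [Field L] → [Algebra ℚ L] → Set ℕ → Set (Point L)
  /-- the `n`-torsion subgroup `A[n]` of `A(ℚ̄)` -/
  tors : ℕ → Type
  instTorsAddCommGroup : ∀ n, AddCommGroup (tors n)
  instTorsFinite : ∀ n, Finite (tors n)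
  tors_nsmul : ∀ n (x : tors n), n • x = 0
  /-- the Galois action of `Gal(ℚ̄/ℚ)` on `A[n]` -/
  galRep : (n : ℕ) →
    (AlgebraicClosure ℚ ≃ₐ[ℚ] AlgebraicClosure ℚ) →* AddAut (tors n)
  /-- a choice of Frobenius element at each prime `p` -/
  frob : ℕ → (AlgebraicClosure ℚ ≃ₐ[ℚ] AlgebraicClosure ℚ)
  /-- a Frobenius element at a good prime `p` acts on roots of unity of order prime to `p`
  by raising to the `p`-th power -/
  frob_spec : ∀ p : ℕ, p.Prime → ¬ p ∣ conductor →
    ∀ x : AlgebraicClosure ℚ, (∃ k : ℕ, 0 < k ∧ ¬ p ∣ k ∧ x ^ k = 1) →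
      frob p x = x ^ p

attribute [instance] AbelianVarietyQ.instAddCommGroup AbelianVarietyQ.instResAddCommGroup
  AbelianVarietyQ.instResFinite AbelianVarietyQ.instTorsAddCommGroup
  AbelianVarietyQ.instTorsFinite

/-- `H_ℓ(A) = Gal(ℚ(A[ℓ])/ℚ(ζ_ℓ))`, realized as the image, under the mod-`ℓ` representation,
of the subgroup of `Gal(ℚ̄/ℚ)` fixing `ℚ(ζ_ℓ)`; it is a subgroup of
`G_ℓ(A) = Gal(ℚ(A[ℓ])/ℚ)`, the image of the full representation. -/
noncomputable def AbelianVarietyQ.Hl (A : AbelianVarietyQ) (ℓ : ℕ) : Subgroup (AddAut (A.tors ℓ)) :=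
  Subgroup.map (A.galRep ℓ)
    (IntermediateField.fixingSubgroup
      (IntermediateField.adjoin ℚ {x : AlgebraicClosure ℚ | x ^ ℓ = 1}))

/-- `𝒞_ℓ(A)`: the set of elements of `H_ℓ(A)` acting freely on `A[ℓ]` (fixing no nonzero
torsion point). -/
def AbelianVarietyQ.Cl (A : AbelianVarietyQ) (ℓ : ℕ) : Set (AddAut (A.tors ℓ)) :=
  {g | g ∈ A.Hl ℓ ∧ ∀ x : A.tors ℓ, g x = x → x = 0}

/-- The general symplectic group `GSp_{2d}(𝔽_ℓ)` (symplectic similitudes): matrices `M` with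
`M J Mᵀ = ν J` for some nonzero similitude factor `ν`. -/
def GSpSet (d ℓ : ℕ) : Set (Matrix (Fin d ⊕ Fin d) (Fin d ⊕ Fin d) (ZMod ℓ)) :=
  {M | ∃ ν : (ZMod ℓ)ˣ,
    M * Matrix.J (Fin d) (ZMod ℓ) * M.transpose = (ν : ZMod ℓ) • Matrix.J (Fin d) (ZMod ℓ)}

/-- Let `A/ℚ` be a principally polarized abelian variety of dimension `d`
(so that `A[ℓ] ≅ 𝔽_ℓ^{2d}` carries a symplectic pairing and the mod-`ℓ` representation
`ρ̄_{A,ℓ} : Gal(ℚ̄/ℚ) → GSp_{2d}(𝔽_ℓ)` is the Galois action on `A[ℓ]` in suitable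
coordinates).  If `ρ̄_{A,ℓ}` is surjective then `𝒞_ℓ(A) ≠ ∅`, i.e. there exists
`σ ∈ H_ℓ(A) = Gal(ℚ(A[ℓ])/ℚ(ζ_ℓ))` acting freely on `A[ℓ]`. -/
theorem Cl_nonempty_of_mod_ell_rep_surjective
    (A : AbelianVarietyQ) (d ℓ : ℕ) (hℓ : ℓ.Prime) (hd : 1 ≤ d)
    (ρ : (AlgebraicClosure ℚ ≃ₐ[ℚ] AlgebraicClosure ℚ) →*
      Matrix (Fin d ⊕ Fin d) (Fin d ⊕ Fin d) (ZMod ℓ))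
    (e : A.tors ℓ ≃+ ((Fin d ⊕ Fin d) → ZMod ℓ))
    (hcompat : ∀ σ (x : A.tors ℓ), e (A.galRep ℓ σ x) = (ρ σ).mulVec (e x))
    (hmem : ∀ σ, ρ σ ∈ GSpSet d ℓ)
    (hsurj : ∀ M ∈ GSpSet d ℓ, ∃ σ, ρ σ = M) :
    ∃ g ∈ A.Hl ℓ, ∀ x : A.tors ℓ, g x = x → x = 0 := by
  classical
  -- The four explicit symplectic matrices.
  set P : Matrix (Fin d ⊕ Fin d) (Fin d ⊕ Fin d) (ZMod ℓ) := Matrix.fromBlocks 1 1 0 1 with hP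
  set Q : Matrix (Fin d ⊕ Fin d) (Fin d ⊕ Fin d) (ZMod ℓ) := Matrix.fromBlocks 1 0 1 1 with hQ
  set Pi : Matrix (Fin d ⊕ Fin d) (Fin d ⊕ Fin d) (ZMod ℓ) := Matrix.fromBlocks 1 (-1) 0 1 with hPi
  set Qi : Matrix (Fin d ⊕ Fin d) (Fin d ⊕ Fin d) (ZMod ℓ) := Matrix.fromBlocks 1 0 (-1) 1 with hQi
  have hPmem : P ∈ GSpSet d ℓ := by
    refine ⟨1, ?_⟩
    simp [hP, GSpSet, Matrix.J, Matrix.fromBlocks_transpose, Matrix.fromBlocks_multiply,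
      Matrix.fromBlocks_smul]
  have hQmem : Q ∈ GSpSet d ℓ := by
    refine ⟨1, ?_⟩
    simp [hQ, GSpSet, Matrix.J, Matrix.fromBlocks_transpose, Matrix.fromBlocks_multiply,
      Matrix.fromBlocks_smul]
  obtain ⟨σ, hσ⟩ := hsurj P hPmem
  obtain ⟨τ, hτ⟩ := hsurj Q hQmem
  set w : AlgebraicClosure ℚ ≃ₐ[ℚ] AlgebraicClosure ℚ := σ * τ * σ⁻¹ * τ⁻¹ with hw
  -- Every Galois automorphism acts on ℓ-th roots of unity by a power map.
  have key : ∀ f : AlgebraicClosure ℚ ≃ₐ[ℚ] AlgebraicClosure ℚ,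
      ∃ a : ℕ, ∀ x : AlgebraicClosure ℚ, x ^ ℓ = 1 → f x = x ^ a := by
    intro f
    have h0 : NeZero ((ℓ : ℕ) : AlgebraicClosure ℚ) :=
      ⟨by simpa using (Nat.cast_ne_zero (R := AlgebraicClosure ℚ)).mpr hℓ.ne_zero⟩
    have : NeZero ℓ := ⟨hℓ.ne_zero⟩
    obtain ⟨ζ, hζ⟩ := HasEnoughRootsOfUnity.exists_primitiveRoot (AlgebraicClosure ℚ) ℓ
    have hfζ : (f ζ) ^ ℓ = 1 := by rw [← map_pow, hζ.pow_eq_one, _root_.map_one]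
    obtain ⟨a, -, ha⟩ := hζ.eq_pow_of_pow_eq_one hfζ
    refine ⟨a, fun x hx => ?_⟩
    obtain ⟨k, -, rfl⟩ := hζ.eq_pow_of_pow_eq_one hx
    rw [map_pow, ← ha, ← pow_mul, ← pow_mul, mul_comm]
  -- Hence the commutator w fixes every ℓ-th root of unity.
  have hcomm : ∀ (f g : AlgebraicClosure ℚ ≃ₐ[ℚ] AlgebraicClosure ℚ)
      (x : AlgebraicClosure ℚ), x ^ ℓ = 1 → f (g x) = g (f x) := by
    intro f g x hx
    obtain ⟨a, ha⟩ := key f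
    obtain ⟨b, hb⟩ := key g
    have hxa : (x ^ a) ^ ℓ = 1 := by rw [← pow_mul, mul_comm, pow_mul, hx, one_pow]
    have hxb : (x ^ b) ^ ℓ = 1 := by rw [← pow_mul, mul_comm, pow_mul, hx, one_pow]
    rw [hb x hx, ha x hx, ha _ hxb, hb _ hxa, ← pow_mul, ← pow_mul, mul_comm]
  have hwfix : ∀ x : AlgebraicClosure ℚ, x ^ ℓ = 1 → w x = x := by
    intro x hx
    have h1 : (τ⁻¹ x) ^ ℓ = 1 := by rw [← map_pow, hx, _root_.map_one]
    have h2 : (σ⁻¹ (τ⁻¹ x)) ^ ℓ = 1 := by rw [← map_pow, h1, _root_.map_one]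
    have : w x = σ (τ (σ⁻¹ (τ⁻¹ x))) := rfl
    rw [this, hcomm σ τ _ h2]
    show τ (σ (σ.symm (τ.symm x))) = x
    rw [σ.apply_symm_apply, τ.apply_symm_apply]
  -- Membership of w in the fixing subgroup of ℚ(ζ_ℓ).
  have hwmem : w ∈ IntermediateField.fixingSubgroup
      (IntermediateField.adjoin ℚ {x : AlgebraicClosure ℚ | x ^ ℓ = 1}) := by
    rw [IntermediateField.mem_fixingSubgroup_iff]
    intro x hx
    induction hx using IntermediateField.adjoin_induction with
    | mem y hy => exact hwfix y hy
    | algebraMap y => exact w.commutes y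
    | add y z _ _ hy hz => rw [map_add, hy, hz]
    | inv y _ hy => rw [map_inv₀, hy]
    | mul y z _ _ hy hz => rw [_root_.map_mul, hy, hz]
  refine ⟨A.galRep ℓ w, ⟨w, hwmem, rfl⟩, ?_⟩
  -- The commutator matrix.
  have hρσi : ρ σ⁻¹ = Pi := by
    have hprod : P * Pi = 1 := by
      simp [hP, hPi, Matrix.fromBlocks_multiply, ← Matrix.fromBlocks_one]
    have hinv : ρ σ⁻¹ * P = 1 := by
      rw [← hσ, ← _root_.map_mul, inv_mul_cancel, _root_.map_one]
    calc ρ σ⁻¹ = ρ σ⁻¹ * (P * Pi) := by rw [hprod, mul_one]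
      _ = (ρ σ⁻¹ * P) * Pi := by rw [mul_assoc]
      _ = Pi := by rw [hinv, one_mul]
  have hρτi : ρ τ⁻¹ = Qi := by
    have hprod : Q * Qi = 1 := by
      simp [hQ, hQi, Matrix.fromBlocks_multiply, ← Matrix.fromBlocks_one]
    have hinv : ρ τ⁻¹ * Q = 1 := by
      rw [← hτ, ← _root_.map_mul, inv_mul_cancel, _root_.map_one]
    calc ρ τ⁻¹ = ρ τ⁻¹ * (Q * Qi) := by rw [hprod, mul_one]
      _ = (ρ τ⁻¹ * Q) * Qi := by rw [mul_assoc]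
      _ = Qi := by rw [hinv, one_mul]
  have hρw : ρ w = Matrix.fromBlocks (1 + 1 + 1) (-1) 1 0 := by
    rw [hw, map_mul, map_mul, map_mul, hσ, hτ, hρσi, hρτi, hP, hQ, hPi, hQi]
    simp [Matrix.fromBlocks_multiply]
  -- Freeness of the action of w on the ℓ-torsion.
  intro x hx
  have hv : (ρ w).mulVec (e x) = e x := by rw [← hcompat, hx]
  rw [hρw, Matrix.fromBlocks_mulVec] at hv
  set v : (Fin d ⊕ Fin d) → ZMod ℓ := e x with hvdef
  have h1 := fun i => congrFun hv (Sum.inl i)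
  have h2 := fun i => congrFun hv (Sum.inr i)
  simp [Matrix.add_mulVec, Matrix.neg_mulVec] at h1 h2
  have hz : ∀ i, v (Sum.inr i) = 0 := by
    intro i
    have := h1 i; rw [h2 i] at this; linear_combination this
  have hv0 : v = 0 := by
    funext j
    cases j with
    | inl i => simpa [hz i] using h2 i
    | inr i => simpa using hz i
  have : e x = 0 := hv0
  simpa using congrArg e.symm this
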